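/- For every depth d ≥ 0 and every input x ∈ {0,1}^{2^d} with NAND_d(x) = 0, the minimum st-cut size of the NAND-tree graph satisfies C_{s,t}(G_{NAND_d}(x)) = 2^{⌊d/2⌋}. -/

import Mathlib

open scoped ENNReal

namespace STConn

variable {V E : Type*}

/-- `v` is an endpoint of edge `e`. -/
def Touches (ends : E → V × V) (e : E) (v : V) : Prop :=
  (ends e).1 = v ∨ (ends e).2 = v

/-- Net flow out of vertex `v` for an edge-valued function `θ` (value along the
fixed orientation of each edge). -/
noncomputable def netflow [Fintype E] [DecidableEq V] (ends : E → V × V) (θ : E → ℝ) (v : V) : ℝ :=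
  ∑ e, θ e * ((if (ends e).1 = v then (1:ℝ) else 0) - (if (ends e).2 = v then 1 else 0))

/-- `θ` is a unit `st`-flow: net flow `+1` at `s`, `-1` at `t`, `0` elsewhere. -/
def IsUnitFlow [Fintype E] [DecidableEq V] (ends : E → V × V) (s t : V) (θ : E → ℝ) : Prop :=
  ∀ v, netflow ends θ v = (if v = s then (1:ℝ) else 0) - (if v = t then 1 else 0)

/-- Energy of a flow with respect to edge weights `c`. -/
noncomputable def energy [Fintype E] (c : E → ℝ) (θ : E → ℝ) : ℝ :=
  ∑ e, θ e ^ 2 / c e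

/-- Effective resistance between `s` and `t`, restricted to flows supported on `S`
(taking value `∞` if no unit `st`-flow supported on `S` exists). -/
noncomputable def effResOn [Fintype E] [DecidableEq V] (ends : E → V × V) (c : E → ℝ)
    (S : Set E) (s t : V) : ℝ≥0∞ :=
  ⨅ θ : {θ : E → ℝ // IsUnitFlow ends s t θ ∧ ∀ e ∉ S, θ e = 0},
    ENNReal.ofReal (energy c θ.1)

/-- Effective resistance between `s` and `t` in the network `(ends, c)`. -/
noncomputable def effRes [Fintype E] [DecidableEq V] (ends : E → V × V) (c : E → ℝ)
    (s t : V) : ℝ≥0∞ :=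
  effResOn ends c Set.univ s t

end STConn

namespace STConn

/-- Read-once AND-OR formulas on `N` variables (gates have fan-in `k+1`). -/
inductive Formula (N : ℕ) : Type where
  | var : Fin N → Formula N
  | and : (k : ℕ) → (Fin (k + 1) → Formula N) → Formula N
  | or : (k : ℕ) → (Fin (k + 1) → Formula N) → Formula N

namespace Formula

variable {N : ℕ}

/-- Evaluation of a formula on an input. -/
def eval : Formula N → (Fin N → Bool) → Bool
  | .var i, x => x i
  | .and _ fs, x => (List.finRange _).all fun i => (fs i).eval x
  | .or _ fs, x => (List.finRange _).any fun i => (fs i).eval x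

/-- The leaves of a formula; these index the edges of the graph `G_φ`. -/
def Leaves : Formula N → Type
  | .var _ => Unit
  | .and k fs => Σ i : Fin (k + 1), (fs i).Leaves
  | .or k fs => Σ i : Fin (k + 1), (fs i).Leaves

/-- The variable labelling a leaf. -/
def label : (φ : Formula N) → φ.Leaves → Fin N
  | .var i, _ => i
  | .and _ fs, ⟨i, l⟩ => (fs i).label l
  | .or _ fs, ⟨i, l⟩ => (fs i).label l

/-- The internal (non-terminal) vertices of the series-parallel graph `G_φ`:
series composition (for `∧`) introduces `k` junction vertices. -/
def Inner : Formula N → Type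
  | .var _ => Empty
  | .and k fs => (Σ i : Fin (k + 1), (fs i).Inner) ⊕ Fin k
  | .or k fs => Σ i : Fin (k + 1), (fs i).Inner

/-- The vertex set of `G_φ`: internal vertices plus the two terminals
(`Sum.inr true = s`, `Sum.inr false = t`). -/
abbrev Vert (φ : Formula N) : Type := φ.Inner ⊕ Bool

/-- Embedding the vertices of the `i`-th subgraph into a series composition. -/
def vmapAnd (k : ℕ) (fs : Fin (k + 1) → Formula N) (i : Fin (k + 1)) :
    (fs i).Vert → (Formula.and k fs).Vert
  | .inl w => .inl (.inl ⟨i, w⟩)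
  | .inr true =>
      if h : i.val = 0 then .inr true
      else .inl (.inr ⟨i.val - 1, by have := i.isLt; omega⟩)
  | .inr false =>
      if h : i.val = k then .inr false
      else .inl (.inr ⟨i.val, by have := i.isLt; omega⟩)

/-- Embedding the vertices of the `i`-th subgraph into a parallel composition. -/
def vmapOr (k : ℕ) (fs : Fin (k + 1) → Formula N) (i : Fin (k + 1)) :
    (fs i).Vert → (Formula.or k fs).Vert
  | .inl w => .inl ⟨i, w⟩
  | .inr b => .inr b

/-- The endpoints of each edge (= leaf) of the series-parallel graph `G_φ`:
a variable is a single `st`-edge, `∧` composes the subgraphs in series, and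
`∨` composes them in parallel. -/
def ends : (φ : Formula N) → φ.Leaves → φ.Vert × φ.Vert
  | .var _, _ => (.inr true, .inr false)
  | .and k fs, ⟨i, l⟩ =>
      (vmapAnd k fs i ((fs i).ends l).1, vmapAnd k fs i ((fs i).ends l).2)
  | .or k fs, ⟨i, l⟩ =>
      (vmapOr k fs i ((fs i).ends l).1, vmapOr k fs i ((fs i).ends l).2)

/-- The dual formula: swap every `∧` with `∨`. -/
def dualF : Formula N → Formula N
  | .var i => .var i
  | .and k fs => .or k fun i => dualF (fs i)
  | .or k fs => .and k fun i => dualF (fs i)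

def leavesFintype : (φ : Formula N) → Fintype φ.Leaves
  | .var _ => inferInstanceAs (Fintype Unit)
  | .and k fs =>
      letI := fun i => leavesFintype (fs i)
      inferInstanceAs (Fintype (Σ i : Fin (k + 1), (fs i).Leaves))
  | .or k fs =>
      letI := fun i => leavesFintype (fs i)
      inferInstanceAs (Fintype (Σ i : Fin (k + 1), (fs i).Leaves))

instance (φ : Formula N) : Fintype φ.Leaves := leavesFintype φ

def innerDecEq : (φ : Formula N) → DecidableEq φ.Inner
  | .var _ => fun a => a.elim
  | .and k fs =>
      letI := fun i => innerDecEq (fs i)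
      inferInstanceAs (DecidableEq ((Σ i : Fin (k + 1), (fs i).Inner) ⊕ Fin k))
  | .or k fs =>
      letI := fun i => innerDecEq (fs i)
      inferInstanceAs (DecidableEq (Σ i : Fin (k + 1), (fs i).Inner))

instance (φ : Formula N) : DecidableEq φ.Inner := innerDecEq φ

instance (φ : Formula N) : DecidableEq φ.Vert :=
  inferInstanceAs (DecidableEq (φ.Inner ⊕ Bool))

/-- The source terminal `s` of `G_φ`. -/
def src (φ : Formula N) : φ.Vert := .inr true

/-- The sink terminal `t` of `G_φ`. -/
def snk (φ : Formula N) : φ.Vert := .inr false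

end Formula
end STConn
namespace STConn

variable {V E : Type*}

/-- The minimum `st`-cut size of the subgraph with present edge set `S`, counting
crossing edges of the ambient graph: the minimum over `κ : V → {0,1}` with
`κ(s) = 1`, `κ(t) = 0` and `κ` constant across every present edge, of the number
of ambient edges with endpoints on both sides; `∞` if no such cut exists
(i.e. if `s` and `t` are connected through `S`). -/
noncomputable def minCutOn [Fintype E] (ends : E → V × V) (S : Set E) (s t : V) : ℕ∞ :=
  ⨅ κ : {κ : V → Bool // κ s = true ∧ κ t = false ∧
          ∀ e ∈ S, κ (ends e).1 = κ (ends e).2},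
    ((Finset.univ.filter fun e : E => κ.1 (ends e).1 ≠ κ.1 (ends e).2).card : ℕ∞)

end STConn
namespace STConn
namespace Formula

/-- Relabel the variables of a formula along `f`. -/
def relabel {N M : ℕ} (f : Fin N → Fin M) : Formula N → Formula M
  | .var i => .var (f i)
  | .and k fs => .and k fun i => (fs i).relabel f
  | .or k fs => .or k fun i => (fs i).relabel f

end Formula

/-- The embedding of the `i`-th half of `Fin (2^(d+1))`. -/
def embed (d : ℕ) (i : Fin 2) : Fin (2 ^ d) → Fin (2 ^ (d + 1)) := fun j =>
  ⟨i.val * 2 ^ d + j.val, by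
    have hj := j.isLt
    have hi : i.val * 2 ^ d ≤ 1 * 2 ^ d :=
      Nat.mul_le_mul_right _ (Nat.lt_succ_iff.mp i.isLt)
    have h2 : 2 ^ (d + 1) = 2 ^ d + 2 ^ d := by ring
    omega⟩

/-- The depth-`d` NAND-tree formula: a full binary AND-OR tree on `2^d`
variables with `∨`-gates at even distance from the leaves and `∧`-gates at odd
distance (so the root is `∧` iff `d` is odd); `NAND₀` is a single variable. -/
def nandTree : (d : ℕ) → Formula (2 ^ d)
  | 0 => .var ⟨0, Nat.one_pos⟩
  | d + 1 =>
      if (d + 1) % 2 = 1 then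
        .and 1 fun i => (nandTree d).relabel (embed d i)
      else
        .or 1 fun i => (nandTree d).relabel (embed d i)

/-- The input to the `i`-th principal subtree of a depth-`(d+1)` NAND-tree. -/
def half (d : ℕ) (i : Fin 2) (x : Fin (2 ^ (d + 1)) → Bool) : Fin (2 ^ d) → Bool :=
  fun j => x (embed d i j)

end STConn
namespace STConn

lemma exists_cast_eq_iInf {ι : Type*} [Nonempty ι] (g : ι → ℕ) :
    ∃ i, (⨅ j, (g j : ℕ∞)) = (g i : ℕ∞) := by
  obtain ⟨i, hi⟩ := Nat.sInf_mem (Set.range_nonempty g)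
  refine ⟨i, le_antisymm (iInf_le _ i) (le_iInf fun j => Nat.cast_le.mpr ?_)⟩
  rw [hi]; exact Nat.sInf_le ⟨j, rfl⟩

lemma exists_descent (m : ℕ → Bool) :
    ∀ n, m 0 = true → m n = false → ∃ j, j < n ∧ m j = true ∧ m (j+1) = false := by
  intro n
  induction n with
  | zero => intro h0 hn; rw [h0] at hn; exact absurd hn (by simp)
  | succ n ih =>
    intro h0 hn
    cases hmn : m n with
    | false =>
      obtain ⟨j, hj, h⟩ := ih h0 hmn
      exact ⟨j, hj.trans (Nat.lt_succ_self n), h⟩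
    | true => exact ⟨n, Nat.lt_succ_self n, hmn, hn⟩

lemma iInf_fin_two {α : Type*} [CompleteLattice α] (f : Fin 2 → α) :
    ⨅ i, f i = f 0 ⊓ f 1 :=
  le_antisymm (le_inf (iInf_le _ 0) (iInf_le _ 1))
    (le_iInf fun i => by fin_cases i; exacts [inf_le_left, inf_le_right])

namespace Formula

variable {N : ℕ}

/-- Auxiliary cut value. -/
noncomputable def cutVal : Formula N → (Fin N → Bool) → ℕ∞
  | .var i, x => if x i then ⊤ else 1
  | .and _ fs, x => ⨅ i, cutVal (fs i) x
  | .or _ fs, x => ∑ i, cutVal (fs i) x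

/-- crossing count -/
def xCard (φ : Formula N) (κ : φ.Vert → Bool) : ℕ :=
  (Finset.univ.filter fun e => κ (φ.ends e).1 ≠ κ (φ.ends e).2).card

/-- valid cuts -/
abbrev Cuts (φ : Formula N) (x : Fin N → Bool) :=
  {κ : φ.Vert → Bool // κ φ.src = true ∧ κ φ.snk = false ∧
    ∀ e ∈ {l | x (φ.label l) = true}, κ (φ.ends e).1 = κ (φ.ends e).2}

lemma minCutOn_eq (φ : Formula N) (x : Fin N → Bool) :
    minCutOn φ.ends {l | x (φ.label l) = true} φ.src φ.snk
      = ⨅ κ : Cuts φ x, (xCard φ κ.1 : ℕ∞) := rfl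

lemma xCard_and (k : ℕ) (fs : Fin (k+1) → Formula N) (κ : (Formula.and k fs).Vert → Bool) :
    xCard (.and k fs) κ = ∑ i, xCard (fs i) (κ ∘ vmapAnd k fs i) := by
  simp only [xCard, Finset.card_filter]
  show (∑ e : (Σ i, (fs i).Leaves),
      if κ ((Formula.and k fs).ends e).1 ≠ κ ((Formula.and k fs).ends e).2 then 1 else 0) = _
  rw [← Finset.univ_sigma_univ, Finset.sum_sigma]
  rfl

lemma xCard_or (k : ℕ) (fs : Fin (k+1) → Formula N) (κ : (Formula.or k fs).Vert → Bool) :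
    xCard (.or k fs) κ = ∑ i, xCard (fs i) (κ ∘ vmapOr k fs i) := by
  simp only [xCard, Finset.card_filter]
  show (∑ e : (Σ i, (fs i).Leaves),
      if κ ((Formula.or k fs).ends e).1 ≠ κ ((Formula.or k fs).ends e).2 then 1 else 0) = _
  rw [← Finset.univ_sigma_univ, Finset.sum_sigma]
  rfl

theorem minCut_eq_cutVal (φ : Formula N) (x : Fin N → Bool) :
    minCutOn φ.ends {l | x (φ.label l) = true} φ.src φ.snk = cutVal φ x := by
  rw [minCutOn_eq]
  induction φ with
  | var i =>
    by_cases hx : x i = true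
    · have : IsEmpty (Cuts (Formula.var i) x) := by
        refine ⟨fun κ => ?_⟩
        have h3 : κ.1 (Formula.var i).src = κ.1 (Formula.var i).snk := κ.2.2.2 () hx
        have : (true : Bool) = false := κ.2.1.symm.trans (h3.trans κ.2.2.1)
        exact absurd this (by simp)
      rw [iInf_of_empty]
      simp [cutVal, hx]
    · have hne : Nonempty (Cuts (Formula.var i) x) := by
        refine ⟨⟨Sum.elim (fun e => e.elim) id, rfl, rfl, ?_⟩⟩
        intro e he; exact absurd he hx
      have hval : ∀ κ : Cuts (Formula.var i) x, (xCard (Formula.var i) κ.1 : ℕ∞) = 1 := by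
        intro κ
        have h1 : κ.1 ((Formula.var i).ends ()).1 = true := κ.2.1
        have h2 : κ.1 ((Formula.var i).ends ()).2 = false := κ.2.2.1

        have : xCard (Formula.var i) κ.1 = 1 := by
          rw [xCard, Finset.filter_true_of_mem, Finset.card_univ]
          · rfl
          · intro e _
            cases e
            rw [h1, h2]; simp
        rw [this, Nat.cast_one]
      rw [iInf_congr hval, iInf_const]
      simp [cutVal, hx]
  | and k fs ih =>
    rw [show cutVal (Formula.and k fs) x = ⨅ i, cutVal (fs i) x from rfl]
    apply le_antisymm
    · refine le_iInf fun i => ?_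
      rw [← ih i]
      refine le_iInf fun κi => ?_
      let κ : (Formula.and k fs).Vert → Bool := fun v =>
        match v with
        | .inl (.inl ⟨j, w⟩) => if h : j = i then κi.1 (.inl (h ▸ w)) else decide ((j:ℕ) < (i:ℕ))
        | .inl (.inr j) => decide ((j:ℕ) < (i:ℕ))
        | .inr b => b
      have happ1 : ∀ (j : Fin (k+1)) (w : (fs j).Inner), (κ ∘ vmapAnd k fs j) (.inl w)
          = if h : j = i then κi.1 (.inl (h ▸ w)) else decide ((j:ℕ) < (i:ℕ)) := fun j w => rfl
      have happ2 : ∀ j : Fin (k+1), (κ ∘ vmapAnd k fs j) (.inr true)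
          = if (j:ℕ) = 0 then true else decide ((j:ℕ) - 1 < (i:ℕ)) := by
        intro j
        by_cases h0 : (j:ℕ) = 0
        · have hv : vmapAnd k fs j (.inr true) = .inr true := by
            simp only [vmapAnd]; rw [dif_pos h0]
          show κ (vmapAnd k fs j (.inr true)) = _
          rw [hv, if_pos h0]
        · have hv : vmapAnd k fs j (.inr true)
              = .inl (.inr ⟨(j:ℕ) - 1, by have := j.isLt; omega⟩) := by
            simp only [vmapAnd]; rw [dif_neg h0]
          show κ (vmapAnd k fs j (.inr true)) = _
          rw [hv, if_neg h0]
      have happ3 : ∀ j : Fin (k+1), (κ ∘ vmapAnd k fs j) (.inr false)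
          = if (j:ℕ) = k then false else decide ((j:ℕ) < (i:ℕ)) := by
        intro j
        by_cases h0 : (j:ℕ) = k
        · have hv : vmapAnd k fs j (.inr false) = .inr false := by
            simp only [vmapAnd]; rw [dif_pos h0]
          show κ (vmapAnd k fs j (.inr false)) = _
          rw [hv, if_pos h0]
        · have hv : vmapAnd k fs j (.inr false)
              = .inl (.inr ⟨(j:ℕ), by have := j.isLt; omega⟩) := by
            simp only [vmapAnd]; rw [dif_neg h0]
          show κ (vmapAnd k fs j (.inr false)) = _
          rw [hv, if_neg h0]
      have hA : κ ∘ vmapAnd k fs i = κi.1 := by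
        funext v
        match v with
        | .inl w => rw [happ1, dif_pos rfl]
        | .inr true =>
          rw [happ2]
          split_ifs with h0
          · exact κi.2.1.symm
          · exact (decide_eq_true (show (i:ℕ) - 1 < (i:ℕ) by omega)).trans κi.2.1.symm
        | .inr false =>
          rw [happ3]
          split_ifs with h0
          · exact κi.2.2.1.symm
          · exact (decide_eq_false (show ¬((i:ℕ) < (i:ℕ)) by omega)).trans κi.2.2.1.symm
      have hB : ∀ j : Fin (k+1), j ≠ i → ∀ v, (κ ∘ vmapAnd k fs j) v = decide ((j:ℕ) < (i:ℕ)) := by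
        intro j hj v
        have hji : (j:ℕ) ≠ (i:ℕ) := fun hh => hj (Fin.ext hh)
        have hik := i.isLt
        match v with
        | .inl w => rw [happ1, dif_neg hj]
        | .inr true =>
          rw [happ2]
          split_ifs with h0
          · exact (decide_eq_true (by omega)).symm
          · rw [decide_eq_decide]; omega
        | .inr false =>
          rw [happ3]
          split_ifs with h0
          · exact (decide_eq_false (by omega)).symm
          · rfl
      have hκ : κ (Formula.and k fs).src = true ∧ κ (Formula.and k fs).snk = false ∧
          ∀ e ∈ {l | x ((Formula.and k fs).label l) = true},
            κ ((Formula.and k fs).ends e).1 = κ ((Formula.and k fs).ends e).2 := by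
        refine ⟨rfl, rfl, ?_⟩
        rintro ⟨j, l⟩ hl
        by_cases hji : j = i
        · subst hji
          have h2 := κi.2.2.2 l hl
          calc κ ((Formula.and k fs).ends ⟨j,l⟩).1
              = (κ ∘ vmapAnd k fs j) ((fs j).ends l).1 := rfl
            _ = (κ ∘ vmapAnd k fs j) ((fs j).ends l).2 := by rw [hA]; exact h2
            _ = κ ((Formula.and k fs).ends ⟨j,l⟩).2 := rfl
        · calc κ ((Formula.and k fs).ends ⟨j,l⟩).1
              = (κ ∘ vmapAnd k fs j) ((fs j).ends l).1 := rfl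
            _ = (κ ∘ vmapAnd k fs j) ((fs j).ends l).2 :=
                (hB j hji _).trans (hB j hji _).symm
            _ = κ ((Formula.and k fs).ends ⟨j,l⟩).2 := rfl
      refine le_trans (iInf_le _ ⟨κ, hκ⟩) (le_of_eq ?_)
      rw [show xCard (Formula.and k fs) κ = ∑ j, xCard (fs j) (κ ∘ vmapAnd k fs j) from
        xCard_and k fs κ]
      rw [Finset.sum_eq_single i]
      · rw [hA]
      · intro j _ hj
        simp only [xCard, Finset.card_eq_zero, Finset.filter_eq_empty_iff]
        intro l _
        rw [hB j hj, hB j hj]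
        simp
      · intro h; exact absurd (Finset.mem_univ i) h
    · refine le_iInf fun κ => ?_
      let m : ℕ → Bool := fun n =>
        if h0 : n = 0 then true
        else if h : n ≤ k then κ.1 (.inl (.inr ⟨n - 1, by omega⟩)) else false
      have hm0 : m 0 = true := rfl
      have hmk : m (k+1) = false := by
        show (if h0 : k+1 = 0 then true
          else if h : k+1 ≤ k then κ.1 (.inl (.inr ⟨k+1-1, by omega⟩)) else false) = false
        rw [dif_neg (by omega), dif_neg (by omega)]
      have key1 : ∀ j : Fin (k+1), κ.1 (vmapAnd k fs j (.inr true)) = m (j:ℕ) := by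
        intro j
        by_cases h0 : (j:ℕ) = 0
        · have hv : vmapAnd k fs j (.inr true) = .inr true := by
            simp only [vmapAnd]; rw [dif_pos h0]
          have hm : m (j:ℕ) = true := by rw [h0]; exact hm0
          rw [hv, hm]; exact κ.2.1
        · have hv : vmapAnd k fs j (.inr true)
              = .inl (.inr ⟨(j:ℕ) - 1, by have := j.isLt; omega⟩) := by
            simp only [vmapAnd]; rw [dif_neg h0]
          have hm : m (j:ℕ) = κ.1 (.inl (.inr ⟨(j:ℕ) - 1, by have := j.isLt; omega⟩)) := by
            show (if h0 : (j:ℕ) = 0 then true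
              else if h : (j:ℕ) ≤ k then κ.1 (.inl (.inr ⟨(j:ℕ)-1, by omega⟩)) else false) = _
            rw [dif_neg h0, dif_pos (by have := j.isLt; omega)]
          rw [hv, hm]
      have key2 : ∀ j : Fin (k+1), κ.1 (vmapAnd k fs j (.inr false)) = m ((j:ℕ)+1) := by
        intro j
        by_cases h0 : (j:ℕ) = k
        · have hv : vmapAnd k fs j (.inr false) = .inr false := by
            simp only [vmapAnd]; rw [dif_pos h0]
          have hm : m ((j:ℕ)+1) = false := by rw [h0]; exact hmk
          rw [hv, hm]; exact κ.2.2.1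
        · have hv : vmapAnd k fs j (.inr false)
              = .inl (.inr ⟨(j:ℕ), by have := j.isLt; omega⟩) := by
            simp only [vmapAnd]; rw [dif_neg h0]
          have hm : m ((j:ℕ)+1) = κ.1 (.inl (.inr ⟨(j:ℕ), by have := j.isLt; omega⟩)) := by
            show (if h0 : (j:ℕ)+1 = 0 then true
              else if h : (j:ℕ)+1 ≤ k then κ.1 (.inl (.inr ⟨(j:ℕ)+1-1, by omega⟩)) else false) = _
            rw [dif_neg (by omega), dif_pos (by have := j.isLt; omega)]
            simp only [Nat.add_sub_cancel]
          rw [hv, hm]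
      obtain ⟨j0, hj0, hjt, hjf⟩ := exists_descent m (k+1) hm0 hmk
      set i : Fin (k+1) := ⟨j0, hj0⟩ with hidef
      have hvalid : (κ.1 ∘ vmapAnd k fs i) (fs i).src = true ∧
          (κ.1 ∘ vmapAnd k fs i) (fs i).snk = false ∧
          ∀ e ∈ {l | x ((fs i).label l) = true},
            (κ.1 ∘ vmapAnd k fs i) ((fs i).ends e).1 = (κ.1 ∘ vmapAnd k fs i) ((fs i).ends e).2 := by
        refine ⟨(key1 i).trans hjt, (key2 i).trans hjf, ?_⟩
        intro e he
        exact κ.2.2.2 ⟨i, e⟩ he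
      calc ⨅ i', cutVal (fs i') x ≤ cutVal (fs i) x := iInf_le _ i
        _ = ⨅ κi : Cuts (fs i) x, (xCard (fs i) κi.1 : ℕ∞) := (ih i).symm
        _ ≤ (xCard (fs i) (κ.1 ∘ vmapAnd k fs i) : ℕ∞) :=
            iInf_le (fun κi : Cuts (fs i) x => (xCard (fs i) κi.1 : ℕ∞)) ⟨_, hvalid⟩
        _ ≤ (xCard (Formula.and k fs) κ.1 : ℕ∞) := by
            rw [xCard_and, Nat.cast_sum]
            exact Finset.single_le_sum (f := fun j => (xCard (fs j) (κ.1 ∘ vmapAnd k fs j) : ℕ∞))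
              (fun _ _ => zero_le) (Finset.mem_univ i)
  | or k fs ih =>
    have hres : ∀ (κ : Cuts (Formula.or k fs) x) (i : Fin (k+1)),
        (κ.1 ∘ vmapOr k fs i) (fs i).src = true ∧ (κ.1 ∘ vmapOr k fs i) (fs i).snk = false ∧
        ∀ e ∈ {l | x ((fs i).label l) = true},
          (κ.1 ∘ vmapOr k fs i) ((fs i).ends e).1 = (κ.1 ∘ vmapOr k fs i) ((fs i).ends e).2 :=
      fun κ i => ⟨κ.2.1, κ.2.2.1, fun e he => κ.2.2.2 ⟨i, e⟩ he⟩
    rw [show cutVal (Formula.or k fs) x = ∑ i, cutVal (fs i) x from rfl]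
    apply le_antisymm
    · by_cases hne : ∀ i, Nonempty (Cuts (fs i) x)
      · have hattain : ∀ i, ∃ κi : Cuts (fs i) x, cutVal (fs i) x = (xCard (fs i) κi.1 : ℕ∞) := by
          intro i
          haveI := hne i
          obtain ⟨κi, hκi⟩ := exists_cast_eq_iInf (fun κ : Cuts (fs i) x => xCard (fs i) κ.1)
          exact ⟨κi, (ih i).symm.trans hκi⟩
        choose κs hκs using hattain
        let κ : (Formula.or k fs).Vert → Bool := fun v =>
          match v with
          | .inl ⟨i, w⟩ => (κs i).1 (.inl w)
          | .inr b => b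
        have hcomp : ∀ i, κ ∘ vmapOr k fs i = (κs i).1 := by
          intro i
          funext v
          match v with
          | .inl w => rfl
          | .inr true => exact (κs i).2.1.symm
          | .inr false => exact (κs i).2.2.1.symm
        have hκ : κ (Formula.or k fs).src = true ∧ κ (Formula.or k fs).snk = false ∧
            ∀ e ∈ {l | x ((Formula.or k fs).label l) = true},
              κ ((Formula.or k fs).ends e).1 = κ ((Formula.or k fs).ends e).2 := by
          refine ⟨rfl, rfl, ?_⟩
          rintro ⟨i, l⟩ hl
          have h2 := (κs i).2.2.2 l hl
          calc κ ((Formula.or k fs).ends ⟨i,l⟩).1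
              = (κ ∘ vmapOr k fs i) ((fs i).ends l).1 := rfl
            _ = (κ ∘ vmapOr k fs i) ((fs i).ends l).2 := by rw [hcomp]; exact h2
            _ = κ ((Formula.or k fs).ends ⟨i,l⟩).2 := rfl
        refine le_trans (iInf_le _ ⟨κ, hκ⟩) ?_
        rw [xCard_or, Nat.cast_sum]
        refine le_of_eq (Finset.sum_congr rfl fun i _ => ?_)
        rw [hcomp i, ← hκs i]
      · push_neg at hne
        obtain ⟨i, hi⟩ := hne
        have htopi : cutVal (fs i) x = ⊤ := by
          rw [← ih i]
          haveI := hi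
          exact iInf_of_empty _
        have htop : (∑ j, cutVal (fs j) x) = ⊤ :=
          top_le_iff.mp (htopi ▸ Finset.single_le_sum
            (f := fun j => cutVal (fs j) x) (fun _ _ => zero_le) (Finset.mem_univ i))
        exact htop ▸ le_top
    · refine le_iInf fun κ => ?_
      calc (∑ i, cutVal (fs i) x)
          ≤ ∑ i, (xCard (fs i) (κ.1 ∘ vmapOr k fs i) : ℕ∞) := by
            refine Finset.sum_le_sum fun i _ => ?_
            rw [← ih i]
            exact iInf_le (fun κi : Cuts (fs i) x => (xCard (fs i) κi.1 : ℕ∞)) ⟨_, hres κ i⟩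
        _ = (xCard (Formula.or k fs) κ.1 : ℕ∞) := by rw [xCard_or, Nat.cast_sum]


lemma eval_relabel {M : ℕ} (f : Fin N → Fin M) (φ : Formula N) (x : Fin M → Bool) :
    (φ.relabel f).eval x = φ.eval (fun j => x (f j)) := by
  induction φ with
  | var i => rfl
  | and k fs ihf =>
    show (List.finRange (k+1)).all (fun i => ((fs i).relabel f).eval x) = _
    congr 1
    funext i
    exact ihf i
  | or k fs ihf =>
    show (List.finRange (k+1)).any (fun i => ((fs i).relabel f).eval x) = _
    congr 1
    funext i
    exact ihf i

lemma cutVal_relabel {M : ℕ} (f : Fin N → Fin M) (φ : Formula N) (x : Fin M → Bool) :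
    cutVal (φ.relabel f) x = cutVal φ (fun j => x (f j)) := by
  induction φ with
  | var i => rfl
  | and k fs ihf =>
    show (⨅ i, cutVal ((fs i).relabel f) x) = _
    exact iInf_congr ihf
  | or k fs ihf =>
    show (∑ i, cutVal ((fs i).relabel f) x) = _
    exact Finset.sum_congr rfl fun i _ => ihf i

lemma finRange_two : List.finRange 2 = [0, 1] := by decide

lemma eval_and_two (fs : Fin 2 → Formula N) (x : Fin N → Bool) :
    (Formula.and 1 fs).eval x = ((fs 0).eval x && (fs 1).eval x) := by
  show (List.finRange 2).all (fun i => (fs i).eval x) = _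
  rw [finRange_two]
  simp [List.all_cons]

lemma eval_or_two (fs : Fin 2 → Formula N) (x : Fin N → Bool) :
    (Formula.or 1 fs).eval x = ((fs 0).eval x || (fs 1).eval x) := by
  show (List.finRange 2).any (fun i => (fs i).eval x) = _
  rw [finRange_two]
  simp [List.any_cons]

end Formula

open Formula in
lemma cutVal_nandTree (d : ℕ) (x : Fin (2^d) → Bool) :
    cutVal (nandTree d) x = if (nandTree d).eval x then ⊤ else (2^(d/2) : ℕ∞) := by
  induction d with
  | zero =>
    rw [show cutVal (nandTree 0) x = (if x ⟨0, Nat.one_pos⟩ then ⊤ else 1) from rfl,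
      show (nandTree 0).eval x = x ⟨0, Nat.one_pos⟩ from rfl]
    cases hx : x ⟨0, Nat.one_pos⟩ <;> simp [hx]
  | succ d ihd =>
    rw [nandTree]
    by_cases hp : (d + 1) % 2 = 1
    · rw [if_pos hp]
      have hd2 : (d+1)/2 = d/2 := by omega
      rw [show cutVal (Formula.and 1 fun i => (nandTree d).relabel (embed d i)) x
          = ⨅ i : Fin 2, cutVal ((nandTree d).relabel (embed d i)) x from rfl]
      rw [iInf_fin_two, eval_and_two, cutVal_relabel, cutVal_relabel,
        eval_relabel, eval_relabel, ihd, ihd, hd2]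
      cases h0 : (nandTree d).eval (fun j => x (embed d 0 j)) <;>
        cases h1 : (nandTree d).eval (fun j => x (embed d 1 j)) <;> simp
    · rw [if_neg hp]
      have hd2 : (d+1)/2 = d/2 + 1 := by omega
      rw [show cutVal (Formula.or 1 fun i => (nandTree d).relabel (embed d i)) x
          = ∑ i : Fin 2, cutVal ((nandTree d).relabel (embed d i)) x from rfl]
      rw [Fin.sum_univ_two, eval_or_two, cutVal_relabel, cutVal_relabel,
        eval_relabel, eval_relabel, ihd, ihd, hd2]
      cases h0 : (nandTree d).eval (fun j => x (embed d 0 j)) <;>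
        cases h1 : (nandTree d).eval (fun j => x (embed d 1 j)) <;>
        simp [pow_succ, mul_two]

end STConn
open STConn Formula in
/-- For every depth `d ≥ 0` and every input `x` with `NAND_d(x) = 0`, the
minimum `st`-cut size of the NAND-tree graph satisfies
`C_{s,t}(G_{NAND_d}(x)) = 2^⌊d/2⌋`. -/
theorem stmt_15 (d : ℕ) (x : Fin (2 ^ d) → Bool)
    (h : (nandTree d).eval x = false) :
    minCutOn (nandTree d).ends {l | x ((nandTree d).label l) = true}
        (nandTree d).src (nandTree d).snk = (2 ^ (d / 2) : ℕ∞) := by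
  rw [Formula.minCut_eq_cutVal, cutVal_nandTree, h]
  simp
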